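/- Let d ≥ 1 and μ ∈ EuclideanSpace ℝ (Fin d), and let P = Measure.pi (fun i => gaussianReal (μ i) 1) be the law of a Gaussian vector X ~ N(μ, I_d) on ℝ^d. Then the pushforward of P under x ↦ Σ_i (x i)² equals the countable mixture Measure.sum (fun j => ENNReal.ofReal (c_j(‖μ‖²)) • gammaMeasure ((d : ℝ)/2 + j) (1/2)), where c_j(λ) = (λ/2)^j e^{-λ/2}/j!; that is, ‖X‖² follows the noncentral chi-square distribution χ²_{nc,d}(λ) with λ = ‖μ‖², realized as a Poisson(λ/2) mixture of Gamma((d+2j)/2, 1/2) distributions. -/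

import Mathlib

open MeasureTheory ProbabilityTheory

/-- The Poisson mixture weight `c_j(λ) = (λ/2)^j e^{-λ/2}/j!`. -/
noncomputable def poissonWeight (j : ℕ) (l : ℝ) : ℝ :=
  (l / 2) ^ j * Real.exp (-l / 2) / (Nat.factorial j)

section NCChiHelpers

open Real Set
open scoped ENNReal

namespace NCChi

lemma sqrt_image_Ioi : Real.sqrt '' Ioi (0:ℝ) = Ioi (0:ℝ) := by
  ext y
  constructor
  · rintro ⟨x, hx, rfl⟩; exact Real.sqrt_pos.2 hx
  · intro hy; exact ⟨y ^ 2, mem_Ioi.2 (pow_pos (mem_Ioi.1 hy) 2), by rw [Real.sqrt_sq (le_of_lt (mem_Ioi.1 hy))]⟩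

lemma lintegral_Ioi_sqrt (F : ℝ → ℝ≥0∞) :
    ∫⁻ x in Ioi (0:ℝ), F x =
      ∫⁻ y in Ioi (0:ℝ), ENNReal.ofReal (1 / (2 * Real.sqrt y)) * F (Real.sqrt y) := by
  conv_lhs => rw [← sqrt_image_Ioi]
  rw [lintegral_image_eq_lintegral_abs_det_fderiv_mul volume measurableSet_Ioi
    (f' := fun y => ContinuousLinearMap.smulRight (1 : ℝ →L[ℝ] ℝ) (1 / (2 * Real.sqrt y)))
    (fun x hx => ((Real.hasDerivAt_sqrt (ne_of_gt hx)).hasDerivWithinAt).hasFDerivWithinAt)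
    (fun a ha b hb hab => by
      have : Real.sqrt a ^ 2 = Real.sqrt b ^ 2 := by rw [hab]
      rwa [Real.sq_sqrt (le_of_lt ha), Real.sq_sqrt (le_of_lt hb)] at this) F]
  refine setLIntegral_congr_fun measurableSet_Ioi (fun y hy => ?_)
  have hsy : 0 < Real.sqrt y := Real.sqrt_pos.2 hy
  rw [ContinuousLinearMap.smulRight_one_eq_toSpanSingleton, ContinuousLinearMap.det_toSpanSingleton, abs_of_pos (by positivity)]

lemma scale_image_Ioo {z : ℝ} (hz : 0 < z) :
    (fun u : ℝ => z * u) '' Ioo 0 1 = Ioo 0 z := by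
  ext x
  constructor
  · rintro ⟨u, ⟨hu0, hu1⟩, rfl⟩
    refine ⟨by simpa using mul_pos hz hu0, ?_⟩
    simpa using (by nlinarith : z * u < z)
  · rintro ⟨hx0, hxz⟩
    exact ⟨x / z, ⟨by positivity, by rw [div_lt_one hz]; exact hxz⟩, by field_simp⟩

lemma lintegral_Ioo_scale {z : ℝ} (hz : 0 < z) (F : ℝ → ℝ≥0∞) :
    ∫⁻ x in Ioo (0:ℝ) z, F x =
      ∫⁻ u in Ioo (0:ℝ) 1, ENNReal.ofReal z * F (z * u) := by
  conv_lhs => rw [← scale_image_Ioo hz]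
  rw [lintegral_image_eq_lintegral_abs_det_fderiv_mul volume measurableSet_Ioo
    (f' := fun _ => ContinuousLinearMap.smulRight (1 : ℝ →L[ℝ] ℝ) z)
    (fun x _ => by simpa [ContinuousLinearMap.smulRight_one_eq_toSpanSingleton] using ((hasDerivAt_id x).const_mul z).hasDerivWithinAt.hasFDerivWithinAt)
    (fun a _ b _ hab => by
      have := mul_left_cancel₀ (ne_of_gt hz) hab; exact this) F]
  refine setLIntegral_congr_fun measurableSet_Ioo (fun u hu => ?_)
  rw [ContinuousLinearMap.smulRight_one_eq_toSpanSingleton, ContinuousLinearMap.det_toSpanSingleton, abs_of_pos hz]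

lemma lintegral_reflect (h : ℝ → ℝ≥0∞) (hm : Measurable h) :
    ∫⁻ x, h x = ∫⁻ x in Ioi (0:ℝ), (h x + h (-x)) := by
  have e : MeasurableEquiv ℝ ℝ := (Homeomorph.neg ℝ).toMeasurableEquiv
  have h1 : ∫⁻ x, h x = (∫⁻ x in Ioi (0:ℝ), h x) + ∫⁻ x in Iic (0:ℝ), h x := by
    have := lintegral_add_compl (μ := volume) h (measurableSet_Ioi (a := (0:ℝ)))
    rw [compl_Ioi] at this
    exact this.symm
  have hneg : ∫⁻ x in Iic (0:ℝ), h x = ∫⁻ x in Ioi (0:ℝ), h (-x) := by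
    have hmp : MeasurePreserving (fun x : ℝ => -x) volume volume :=
      Measure.measurePreserving_neg volume
    have hemb : MeasurableEmbedding (fun x : ℝ => -x) :=
      (Homeomorph.neg ℝ).measurableEmbedding
    have := hmp.setLIntegral_comp_preimage_emb hemb h (Iic (0:ℝ))
    rw [show (fun x : ℝ => -x) ⁻¹' Iic 0 = Ici 0 by ext x; simp] at this
    rw [← this]
    rw [show (volume : Measure ℝ).restrict (Ici 0) = volume.restrict (Ioi 0) from
      (Measure.restrict_congr_set Ioi_ae_eq_Ici).symm]
  rw [h1, hneg]
  exact (lintegral_add_left (μ := volume.restrict (Ioi (0:ℝ))) hm fun x => h (-x)).symm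

lemma map_sq_withDensity {f : ℝ → ℝ≥0∞} (hf : Measurable f) :
    (volume.withDensity f).map (fun x : ℝ => x ^ 2) =
      volume.withDensity ((Ioi (0:ℝ)).indicator fun y =>
        ENNReal.ofReal (1 / (2 * Real.sqrt y)) * (f (Real.sqrt y) + f (- Real.sqrt y))) := by
  ext s hs
  have hsq : Measurable (fun x : ℝ => x ^ 2) := by fun_prop
  rw [Measure.map_apply hsq hs, withDensity_apply _ (hsq hs), withDensity_apply _ hs]
  set g : ℝ → ℝ≥0∞ := s.indicator (fun _ => 1) with hg
  have hgm : Measurable g := measurable_const.indicator hs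
  have hind : ∀ x : ℝ, ((fun x : ℝ => x ^ 2) ⁻¹' s).indicator f x = f x * g (x ^ 2) := by
    intro x
    by_cases h : x ^ 2 ∈ s
    · rw [indicator_of_mem (by simpa using h), hg, indicator_of_mem h, mul_one]
    · rw [indicator_of_notMem (by simpa using h), hg, indicator_of_notMem h, mul_zero]
  calc ∫⁻ x in (fun x : ℝ => x ^ 2) ⁻¹' s, f x
      = ∫⁻ x, f x * g (x ^ 2) := by
        rw [← lintegral_indicator (hsq hs)]
        exact lintegral_congr hind
    _ = ∫⁻ x in Ioi (0:ℝ), (f x * g (x ^ 2) + f (-x) * g ((-x) ^ 2)) := by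
        exact lintegral_reflect _ (hf.mul (hgm.comp hsq))
    _ = ∫⁻ x in Ioi (0:ℝ), (f x + f (-x)) * g (x ^ 2) := by
        refine lintegral_congr fun x => ?_
        rw [neg_pow, add_mul]; ring_nf
    _ = ∫⁻ y in Ioi (0:ℝ), ENNReal.ofReal (1 / (2 * Real.sqrt y)) *
          ((f (Real.sqrt y) + f (- Real.sqrt y)) * g (Real.sqrt y ^ 2)) :=
        lintegral_Ioi_sqrt _
    _ = ∫⁻ y in s, (Ioi (0:ℝ)).indicator (fun y =>
          ENNReal.ofReal (1 / (2 * Real.sqrt y)) * (f (Real.sqrt y) + f (- Real.sqrt y))) y := by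
        rw [← lintegral_indicator measurableSet_Ioi, ← lintegral_indicator hs]
        refine lintegral_congr fun y => ?_
        by_cases hy : y ∈ Ioi (0:ℝ)
        · rw [indicator_of_mem hy, Real.sq_sqrt (le_of_lt hy)]
          by_cases hys : y ∈ s
          · rw [indicator_of_mem hys, indicator_of_mem hy, hg, indicator_of_mem hys, mul_one]
          · rw [indicator_of_notMem hys, hg, indicator_of_notMem hys, mul_zero, mul_zero]
        · rw [indicator_of_notMem hy]
          by_cases hys : y ∈ s
          · rw [indicator_of_mem hys, indicator_of_notMem hy]
          · rw [indicator_of_notMem hys]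

lemma conv_withDensity {f g : ℝ → ℝ≥0∞} (hf : Measurable f) (hg : Measurable g) :
    (volume.withDensity f).conv (volume.withDensity g) =
      volume.withDensity (fun z => ∫⁻ x, f x * g (z - x)) := by
  ext s hs
  have hadd : Measurable (fun p : ℝ × ℝ => p.1 + p.2) := measurable_add
  rw [Measure.conv, Measure.map_apply hadd hs,
    Measure.prod_apply (hadd hs), withDensity_apply _ hs]
  have hinner : ∀ x : ℝ, (volume.withDensity g) (Prod.mk x ⁻¹' ((fun p : ℝ × ℝ => p.1 + p.2) ⁻¹' s))
      = ∫⁻ z in s, g (z - x) := by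
    intro x
    have hpre : Prod.mk x ⁻¹' ((fun p : ℝ × ℝ => p.1 + p.2) ⁻¹' s) = (fun y => x + y) ⁻¹' s := rfl
    rw [hpre, withDensity_apply _ ((measurable_const_add x) hs)]
    have hmp : MeasurePreserving (fun y : ℝ => x + y) volume volume :=
      measurePreserving_add_left volume x
    have hemb : MeasurableEmbedding (fun y : ℝ => x + y) :=
      (Homeomorph.addLeft x).measurableEmbedding
    have := hmp.setLIntegral_comp_preimage_emb hemb (fun z => g (z - x)) s
    simpa using this
  rw [lintegral_congr hinner]
  have hgm2 : Measurable (Function.uncurry fun x z => f x * g (z - x)) := by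
    apply Measurable.mul
    · exact hf.comp measurable_fst
    · exact hg.comp (measurable_snd.sub measurable_fst)
  have hmeas : Measurable fun x : ℝ => ∫⁻ z in s, g (z - x) :=
    Measurable.lintegral_prod_right' (ν := volume.restrict s)
      (f := fun p : ℝ × ℝ => g (p.2 - p.1)) (hg.comp (measurable_snd.sub measurable_fst))
  rw [lintegral_withDensity_eq_lintegral_mul _ hf hmeas]
  calc ∫⁻ x, (f * fun x => ∫⁻ z in s, g (z - x)) x
      = ∫⁻ x, ∫⁻ z in s, f x * g (z - x) := by
        refine lintegral_congr fun x => ?_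
        simp only [Pi.mul_apply]
        rw [← lintegral_const_mul _ (show Measurable fun z : ℝ => g (z - x) by fun_prop)]
    _ = ∫⁻ z in s, ∫⁻ x, f x * g (z - x) := by
        exact lintegral_lintegral_swap hgm2.aemeasurable

lemma lintegral_conv_density {f g : ℝ → ℝ≥0∞} (hf : Measurable f) (hg : Measurable g) :
    ∫⁻ z, (∫⁻ x, f x * g (z - x)) = (∫⁻ x, f x) * ∫⁻ x, g x := by
  have hgm2 : Measurable (Function.uncurry fun z x => f x * g (z - x)) := by
    apply Measurable.mul
    · exact hf.comp measurable_snd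
    · exact hg.comp (measurable_fst.sub measurable_snd)
  rw [lintegral_lintegral_swap hgm2.aemeasurable]
  calc ∫⁻ x, ∫⁻ z, f x * g (z - x)
      = ∫⁻ x, f x * ∫⁻ z, g (z - x) := by
        refine lintegral_congr fun x => ?_
        rw [← lintegral_const_mul _ (show Measurable fun z : ℝ => g (z - x) by fun_prop)]
    _ = (∫⁻ x, f x) * ∫⁻ x, g x := by
        have : ∀ x : ℝ, ∫⁻ z, g (z - x) = ∫⁻ z, g z := by
          intro x
          simpa [sub_eq_add_neg] using lintegral_add_right_eq_self g (-x)
        simp_rw [this]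
        exact (lintegral_mul_const _ hf)

lemma poissonWeight_nonneg {j : ℕ} {l : ℝ} (hl : 0 ≤ l) : 0 ≤ poissonWeight j l := by
  unfold poissonWeight; positivity

lemma poissonWeight_conv (n : ℕ) (a b : ℝ) :
    ∑ p ∈ Finset.HasAntidiagonal.antidiagonal n, poissonWeight p.1 a * poissonWeight p.2 b
      = poissonWeight n (a + b) := by
  rw [Finset.Nat.sum_antidiagonal_eq_sum_range_succ_mk]
  have hpw : poissonWeight n (a + b)
      = ∑ k ∈ Finset.range (n + 1), (a/2) ^ k * (b/2) ^ (n - k) * (n.choose k : ℝ)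
          * (Real.exp (-a/2) * Real.exp (-b/2) / n.factorial) := by
    rw [← Finset.sum_mul]
    have : ((a + b) / 2) ^ n = ∑ k ∈ Finset.range (n + 1), (a/2) ^ k * (b/2) ^ (n - k) * (n.choose k : ℝ) := by
      have := add_pow (a/2) (b/2) n
      rw [show a/2 + b/2 = (a+b)/2 by ring] at this
      simpa using this
    rw [poissonWeight, this, ← Real.exp_add,
      show -a/2 + -b/2 = -(a+b)/2 by ring, mul_div_assoc]
  rw [hpw]
  refine Finset.sum_congr rfl fun k hk => ?_
  have hkn : k ≤ n := Nat.lt_succ_iff.mp (Finset.mem_range.mp hk)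
  have hfact : (n.choose k : ℝ) * (k.factorial : ℝ) * ((n - k).factorial : ℝ) = (n.factorial : ℝ) := by
    exact_mod_cast congrArg Nat.cast (Nat.choose_mul_factorial_mul_factorial hkn)
  simp only [poissonWeight]
  have h1 : (k.factorial : ℝ) ≠ 0 := Nat.cast_ne_zero.2 k.factorial_ne_zero
  have h2 : ((n - k).factorial : ℝ) ≠ 0 := Nat.cast_ne_zero.2 (n - k).factorial_ne_zero
  have h3 : (n.factorial : ℝ) ≠ 0 := Nat.cast_ne_zero.2 n.factorial_ne_zero
  field_simp
  rw [← hfact]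
  ring

/-- the noncentral chi-square density -/
noncomputable def ncPdf (d : ℕ) (l : ℝ) : ℝ → ℝ≥0∞ := fun y =>
  ∑' j : ℕ, ENNReal.ofReal (poissonWeight j l) * gammaPDF ((d : ℝ) / 2 + j) (1 / 2) y

lemma measurable_gammaPDF (a r : ℝ) : Measurable (gammaPDF a r) :=
  ENNReal.measurable_ofReal.comp (measurable_gammaPDFReal a r)

lemma measurable_ncPdf (d : ℕ) (l : ℝ) : Measurable (ncPdf d l) :=
  Measurable.ennreal_tsum fun j => (measurable_gammaPDF _ _).const_mul _

lemma ncChiSq_eq (d : ℕ) (l : ℝ) :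
    Measure.sum (fun j : ℕ =>
        ENNReal.ofReal (poissonWeight j l) • gammaMeasure ((d : ℝ) / 2 + j) (1 / 2))
      = volume.withDensity (ncPdf d l) := by
  have : ∀ j : ℕ, ENNReal.ofReal (poissonWeight j l) • gammaMeasure ((d : ℝ) / 2 + j) (1 / 2)
      = volume.withDensity (fun y => ENNReal.ofReal (poissonWeight j l)
          * gammaPDF ((d : ℝ) / 2 + j) (1 / 2) y) := by
    intro j
    rw [gammaMeasure, ← withDensity_smul _ (measurable_gammaPDF _ _)]
    rfl
  simp_rw [this]
  rw [← withDensity_tsum fun j => (measurable_gammaPDF _ _).const_mul _]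
  congr 1
  ext y
  rw [ncPdf, ENNReal.tsum_apply]

lemma gammaPDF_zero_of_ne_one {a r : ℝ} (ha : a ≠ 1) : gammaPDF a r 0 = 0 := by
  rw [gammaPDF_of_nonneg le_rfl, Real.zero_rpow (by intro h; apply ha; linarith [sub_eq_zero.mp h])]
  simp

lemma ncPdf_of_neg {d : ℕ} {l y : ℝ} (hy : y < 0) : ncPdf d l y = 0 := by
  unfold ncPdf
  simp [gammaPDF_of_neg hy]

lemma half_add_nat_ne_one (j : ℕ) : (1 : ℝ) / 2 + j ≠ 1 := by
  cases j with
  | zero => norm_num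
  | succ n =>
    have h1 : (1:ℝ) ≤ (n:ℝ) + 1 := by exact_mod_cast Nat.one_le_iff_ne_zero.2 (Nat.succ_ne_zero n)
    push_cast
    intro h
    linarith

lemma ncPdf_one_of_nonpos {l y : ℝ} (hy : y ≤ 0) : ncPdf 1 l y = 0 := by
  rcases lt_or_eq_of_le hy with hy' | hy'
  · exact ncPdf_of_neg hy'
  · subst hy'
    unfold ncPdf
    have : ∀ j : ℕ, gammaPDF ((1 : ℝ)/2 + j) (1/2) 0 = 0 := by
      intro j
      refine gammaPDF_zero_of_ne_one ?_
      push_cast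
      exact half_add_nat_ne_one j
    norm_num at this ⊢
    intro j
    right
    exact this j

lemma gamma_conv_real_id {a b r z u : ℝ} (ha : 0 < a) (hb : 0 < b) (hr : 0 < r)
    (hz : 0 < z) (hu : 0 < u) (hu1 : u < 1) :
    z * ((r ^ a / Gamma a * (z * u) ^ (a - 1) * Real.exp (-(r * (z * u)))) *
        (r ^ b / Gamma b * (z - z * u) ^ (b - 1) * Real.exp (-(r * (z - z * u)))))
      = (Gamma (a + b) / (Gamma a * Gamma b) *
          (r ^ (a + b) / Gamma (a + b) * z ^ (a + b - 1) * Real.exp (-(r * z)))) *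
        (u ^ (a - 1) * (1 - u) ^ (b - 1)) := by
  have h1u : (0:ℝ) < 1 - u := by linarith
  have e2 : z - z * u = z * (1 - u) := by ring
  have e1 : (z * u) ^ (a - 1) = z ^ (a - 1) * u ^ (a - 1) := Real.mul_rpow hz.le hu.le
  have e3 : (z * (1 - u)) ^ (b - 1) = z ^ (b - 1) * (1 - u) ^ (b - 1) :=
    Real.mul_rpow hz.le h1u.le
  have e4 : r ^ (a + b) = r ^ a * r ^ b := Real.rpow_add hr a b
  have e5 : z ^ (a + b - 1) = z ^ (a - 1) * z ^ (b - 1) * z := by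
    rw [show a + b - 1 = (a - 1) + ((b - 1) + 1) by ring, Real.rpow_add hz,
      Real.rpow_add hz, Real.rpow_one]
    ring
  have e6 : Real.exp (-(r * (z * u))) * Real.exp (-(r * (z * (1 - u)))) = Real.exp (-(r * z)) := by
    rw [← Real.exp_add]
    ring_nf
  have hGa := Real.Gamma_pos_of_pos ha
  have hGb := Real.Gamma_pos_of_pos hb
  have hGab := Real.Gamma_pos_of_pos (by linarith : (0:ℝ) < a + b)
  rw [e2, e1, e3, e4, e5]
  rw [← e6]
  field_simp

lemma gammaPDF_conv {a b r : ℝ} (ha : 0 < a) (hb : 0 < b) (hr : 0 < r) :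
    (fun z => ∫⁻ x, gammaPDF a r x * gammaPDF b r (z - x)) =ᵐ[volume] gammaPDF (a + b) r := by
  set K : ℝ≥0∞ := ∫⁻ u in Ioo (0:ℝ) 1, ENNReal.ofReal (u ^ (a-1) * (1-u) ^ (b-1)) with hK
  set c : ℝ≥0∞ := K * ENNReal.ofReal (Gamma (a+b) / (Gamma a * Gamma b)) with hc
  have hGa := Real.Gamma_pos_of_pos ha
  have hGb := Real.Gamma_pos_of_pos hb
  have hGab := Real.Gamma_pos_of_pos (by linarith : (0:ℝ) < a + b)
  have key : ∀ z : ℝ, z ≠ 0 →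
      (∫⁻ x, gammaPDF a r x * gammaPDF b r (z - x)) = c * gammaPDF (a+b) r z := by
    intro z hz0
    rcases lt_or_gt_of_ne hz0 with hz | hz
    · have hint : ∀ x : ℝ, gammaPDF a r x * gammaPDF b r (z - x) = 0 := by
        intro x
        rcases lt_or_ge x 0 with hx | hx
        · rw [gammaPDF_of_neg hx, zero_mul]
        · rw [gammaPDF_of_neg (by linarith : z - x < 0), mul_zero]
      simp only [hint, lintegral_zero, gammaPDF_of_neg hz, mul_zero]
    · -- z > 0
      have hout : ∀ x ∈ (Icc (0:ℝ) z)ᶜ, gammaPDF a r x * gammaPDF b r (z - x) = 0 := by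
        intro x hx
        rw [mem_compl_iff, mem_Icc, not_and_or] at hx
        rcases hx with hx | hx
        · rw [gammaPDF_of_neg (lt_of_not_ge hx), zero_mul]
        · rw [gammaPDF_of_neg (by linarith [lt_of_not_ge hx] : z - x < 0), mul_zero]
      have hsplit : (∫⁻ x, gammaPDF a r x * gammaPDF b r (z - x)) =
          ∫⁻ x in Ioo 0 z, gammaPDF a r x * gammaPDF b r (z - x) := by
        rw [← lintegral_add_compl (fun x => gammaPDF a r x * gammaPDF b r (z - x))
          measurableSet_Icc (μ := volume)]
        rw [setLIntegral_congr_fun measurableSet_Icc.compl hout, lintegral_zero,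
          add_zero]
        exact (setLIntegral_congr Ioo_ae_eq_Icc).symm
      rw [hsplit]
      have hGfun : ∀ x ∈ Ioo (0:ℝ) z, gammaPDF a r x * gammaPDF b r (z - x) =
          ENNReal.ofReal ((r ^ a / Gamma a * x ^ (a - 1) * Real.exp (-(r * x))) *
            (r ^ b / Gamma b * (z - x) ^ (b - 1) * Real.exp (-(r * (z - x))))) := by
        intro x hx
        rw [gammaPDF_of_nonneg hx.1.le, gammaPDF_of_nonneg (by linarith [hx.2] : (0:ℝ) ≤ z - x),
          ← ENNReal.ofReal_mul (mul_nonneg (mul_nonneg (div_nonneg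
            (Real.rpow_nonneg hr.le a) hGa.le) (Real.rpow_nonneg hx.1.le _)) (Real.exp_nonneg _))]
      rw [setLIntegral_congr_fun measurableSet_Ioo hGfun]
      rw [lintegral_Ioo_scale hz]
      have hptw : ∀ u ∈ Ioo (0:ℝ) 1, ENNReal.ofReal z *
          ENNReal.ofReal ((r ^ a / Gamma a * (z * u) ^ (a - 1) * Real.exp (-(r * (z * u)))) *
            (r ^ b / Gamma b * (z - z * u) ^ (b - 1) * Real.exp (-(r * (z - z * u)))))
          = ENNReal.ofReal (Gamma (a+b) / (Gamma a * Gamma b) *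
              (r ^ (a+b) / Gamma (a+b) * z ^ (a+b-1) * Real.exp (-(r * z)))) *
            ENNReal.ofReal (u ^ (a-1) * (1-u) ^ (b-1)) := by
        intro u hu
        rw [← ENNReal.ofReal_mul hz.le, gamma_conv_real_id ha hb hr hz hu.1 hu.2,
          ENNReal.ofReal_mul (by positivity)]
      rw [setLIntegral_congr_fun measurableSet_Ioo hptw,
        lintegral_const_mul' _ _ ENNReal.ofReal_ne_top, ← hK]
      rw [gammaPDF_of_nonneg hz.le, hc,
        ENNReal.ofReal_mul (by positivity)]
      ring
  have h0 : ∀ᵐ z : ℝ ∂volume, z ≠ 0 := by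
    refine ae_iff.2 ?_
    have : {z : ℝ | ¬ z ≠ 0} = {0} := by ext z; simp
    rw [this]
    exact Real.volume_singleton
  have hae : (fun z => ∫⁻ x, gammaPDF a r x * gammaPDF b r (z - x)) =ᵐ[volume]
      (fun z => c * gammaPDF (a+b) r z) := by
    filter_upwards [h0] with z hz using key z hz
  have hc1 : c = 1 := by
    have hm1 : ∫⁻ z, (∫⁻ x, gammaPDF a r x * gammaPDF b r (z - x)) = 1 := by
      rw [lintegral_conv_density (measurable_gammaPDF a r) (measurable_gammaPDF b r),
        lintegral_gammaPDF_eq_one ha hr, lintegral_gammaPDF_eq_one hb hr, one_mul]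
    have hm2 : ∫⁻ z, c * gammaPDF (a+b) r z = c := by
      rw [lintegral_const_mul _ (measurable_gammaPDF _ _),
        lintegral_gammaPDF_eq_one (by linarith) hr, mul_one]
    rw [← hm2, ← lintegral_congr_ae hae, hm1]
  filter_upwards [hae] with z hz
  rw [hz, hc1, one_mul]

lemma ncPdf_conv {d e : ℕ} (hd : 1 ≤ d) (he : 1 ≤ e) {k l : ℝ} (hk : 0 ≤ k) (hl : 0 ≤ l) :
    (volume.withDensity (ncPdf d k)).conv (volume.withDensity (ncPdf e l))
      = volume.withDensity (ncPdf (d + e) (k + l)) := by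
  rw [conv_withDensity (measurable_ncPdf d k) (measurable_ncPdf e l)]
  refine withDensity_congr_ae ?_
  set c1 : ℕ → ℝ≥0∞ := fun j => ENNReal.ofReal (poissonWeight j k) with hc1
  set c2 : ℕ → ℝ≥0∞ := fun j => ENNReal.ofReal (poissonWeight j l) with hc2
  set g1 : ℕ → ℝ → ℝ≥0∞ := fun j => gammaPDF ((d : ℝ) / 2 + j) (1 / 2) with hg1
  set g2 : ℕ → ℝ → ℝ≥0∞ := fun j => gammaPDF ((e : ℝ) / 2 + j) (1 / 2) with hg2
  set G : ℕ → ℝ → ℝ≥0∞ := fun n => gammaPDF (((d + e : ℕ) : ℝ) / 2 + n) (1 / 2) with hG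
  have hd' : (1:ℝ) ≤ (d:ℝ) := by exact_mod_cast hd
  have he' : (1:ℝ) ≤ (e:ℝ) := by exact_mod_cast he
  have hshape : ∀ p : ℕ × ℕ, ((d : ℝ) / 2 + p.1) + ((e : ℝ) / 2 + p.2)
      = ((d + e : ℕ) : ℝ) / 2 + ((p.1 + p.2 : ℕ) : ℝ) := by
    intro p; push_cast; ring
  have hjk : ∀ᵐ z : ℝ ∂volume, ∀ p : ℕ × ℕ,
      (∫⁻ x, g1 p.1 x * g2 p.2 (z - x)) = G (p.1 + p.2) z := by
    rw [ae_all_iff]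
    intro p
    have := gammaPDF_conv (a := (d : ℝ) / 2 + p.1) (b := (e : ℝ) / 2 + p.2) (r := 1/2)
      (by positivity) (by positivity) (by norm_num)
    rw [hshape p] at this
    exact this
  filter_upwards [hjk] with z hz
  have hg2m : ∀ j : ℕ, Measurable fun x : ℝ => g2 j (z - x) := fun j =>
    (measurable_gammaPDF _ _).comp (measurable_const.sub measurable_id)
  have hn2 : ∀ x : ℝ, ncPdf e l (z - x) = ∑' j, c2 j * g2 j (z - x) := fun _ => rfl
  calc ∫⁻ x, ncPdf d k x * ncPdf e l (z - x)
      = ∫⁻ x, ∑' j, c1 j * g1 j x * ncPdf e l (z - x) := by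
        refine lintegral_congr fun x => ?_
        rw [show ncPdf d k x = ∑' j, c1 j * g1 j x from rfl, ENNReal.tsum_mul_right]
    _ = ∑' j, ∫⁻ x, c1 j * g1 j x * ncPdf e l (z - x) := by
        refine lintegral_tsum fun j => ?_
        exact (((measurable_gammaPDF _ _).const_mul _).mul
          ((measurable_ncPdf e l).comp (measurable_const.sub measurable_id))).aemeasurable
    _ = ∑' j, ∑' i, c1 j * c2 i * ∫⁻ x, g1 j x * g2 i (z - x) := by
        refine tsum_congr fun j => ?_
        calc ∫⁻ x, c1 j * g1 j x * ncPdf e l (z - x)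
            = ∫⁻ x, ∑' i, c1 j * c2 i * (g1 j x * g2 i (z - x)) := by
              refine lintegral_congr fun x => ?_
              rw [hn2 x, ← ENNReal.tsum_mul_left]
              exact tsum_congr fun i => by ring
          _ = ∑' i, ∫⁻ x, c1 j * c2 i * (g1 j x * g2 i (z - x)) := by
              refine lintegral_tsum fun i => ?_
              exact ((((measurable_gammaPDF _ _).mul (hg2m i))).const_mul _).aemeasurable
          _ = ∑' i, c1 j * c2 i * ∫⁻ x, g1 j x * g2 i (z - x) := by
              refine tsum_congr fun i => ?_
              exact lintegral_const_mul' _ _ (ENNReal.mul_ne_top ENNReal.ofReal_ne_top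
                ENNReal.ofReal_ne_top)
    _ = ∑' j, ∑' i, c1 j * c2 i * G (j + i) z := by
        refine tsum_congr fun j => tsum_congr fun i => ?_
        rw [hz (j, i)]
    _ = ∑' p : ℕ × ℕ, c1 p.1 * c2 p.2 * G (p.1 + p.2) z :=
        (ENNReal.tsum_prod (f := fun a b => c1 a * c2 b * G (a + b) z)).symm
    _ = ∑' n : ℕ, ∑ p ∈ Finset.HasAntidiagonal.antidiagonal n, c1 p.1 * c2 p.2 * G (p.1 + p.2) z := by
        rw [← Equiv.tsum_eq Finset.HasAntidiagonal.sigmaAntidiagonalEquivProd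
          (fun p : ℕ × ℕ => c1 p.1 * c2 p.2 * G (p.1 + p.2) z)]
        rw [show (fun x : Σ n : ℕ, {p : ℕ × ℕ // p ∈ Finset.HasAntidiagonal.antidiagonal n} =>
          (c1 (Finset.HasAntidiagonal.sigmaAntidiagonalEquivProd x).1 * c2 (Finset.HasAntidiagonal.sigmaAntidiagonalEquivProd x).2
            * G ((Finset.HasAntidiagonal.sigmaAntidiagonalEquivProd x).1 + (Finset.HasAntidiagonal.sigmaAntidiagonalEquivProd x).2) z))
          = fun x : Σ n : ℕ, {p : ℕ × ℕ // p ∈ Finset.HasAntidiagonal.antidiagonal n} =>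
            (fun n (q : {p : ℕ × ℕ // p ∈ Finset.HasAntidiagonal.antidiagonal n}) =>
              c1 (q : ℕ × ℕ).1 * c2 (q : ℕ × ℕ).2 * G ((q : ℕ × ℕ).1 + (q : ℕ × ℕ).2) z) x.1 x.2
          from rfl]
        rw [ENNReal.tsum_sigma (fun n (q : {p : ℕ × ℕ // p ∈ Finset.HasAntidiagonal.antidiagonal n}) =>
          c1 (q : ℕ × ℕ).1 * c2 (q : ℕ × ℕ).2 * G ((q : ℕ × ℕ).1 + (q : ℕ × ℕ).2) z)]
        exact tsum_congr fun n => Finset.tsum_subtype (Finset.HasAntidiagonal.antidiagonal n) (fun p : ℕ × ℕ => c1 p.1 * c2 p.2 * G (p.1 + p.2) z)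
    _ = ∑' n : ℕ, ENNReal.ofReal (poissonWeight n (k + l)) * G n z := by
        refine tsum_congr fun n => ?_
        have : ∀ p ∈ Finset.HasAntidiagonal.antidiagonal n, c1 p.1 * c2 p.2 * G (p.1 + p.2) z
            = ENNReal.ofReal (poissonWeight p.1 k * poissonWeight p.2 l) * G n z := by
          intro p hp
          rw [Finset.HasAntidiagonal.mem_antidiagonal.mp hp,
            ENNReal.ofReal_mul (poissonWeight_nonneg hk)]
        rw [Finset.sum_congr rfl this, ← Finset.sum_mul,
          ← ENNReal.ofReal_sum_of_nonneg (fun p _ =>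
            mul_nonneg (poissonWeight_nonneg hk) (poissonWeight_nonneg hl)),
          poissonWeight_conv n k l]
    _ = ncPdf (d + e) (k + l) z := rfl

lemma cosh_tsum (t : ℝ) : ENNReal.ofReal (Real.exp t + Real.exp (-t))
    = ∑' j : ℕ, ENNReal.ofReal (2 * t ^ (2 * j) / ((2 * j).factorial : ℝ)) := by
  set f : ℕ → ℝ := fun n => t ^ n / (n.factorial : ℝ) + (-t) ^ n / (n.factorial : ℝ) with hf
  have hsum : Summable f :=
    (Real.summable_pow_div_factorial t).add (Real.summable_pow_div_factorial (-t))
  have heven : ∀ j : ℕ, f (2 * j) = 2 * t ^ (2 * j) / ((2 * j).factorial : ℝ) := by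
    intro j
    have : (-t) ^ (2 * j) = t ^ (2 * j) := (even_two_mul j).neg_pow t
    rw [hf]; simp only [this]; ring
  have hodd : ∀ j : ℕ, f (2 * j + 1) = 0 := by
    intro j
    have : (-t) ^ (2 * j + 1) = -(t ^ (2 * j + 1)) := (odd_two_mul_add_one j).neg_pow t
    rw [hf]; simp only [this]; ring
  have hse : Summable fun j => f (2 * j) :=
    hsum.comp_injective fun a b hab => by omega
  have hso : Summable fun j => f (2 * j + 1) :=
    hsum.comp_injective fun a b hab => by omega
  have hts : ∑' j : ℕ, f (2 * j) = Real.exp t + Real.exp (-t) := by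
    have h1 := tsum_even_add_odd hse hso
    have h2 : ∑' j : ℕ, f (2 * j + 1) = 0 := by
      rw [tsum_congr hodd]; exact tsum_zero
    rw [h2, add_zero] at h1
    rw [h1, hf]
    rw [Summable.tsum_add (Real.summable_pow_div_factorial t) (Real.summable_pow_div_factorial (-t))]
    rw [Real.exp_eq_exp_ℝ, NormedSpace.exp_eq_tsum_div]
  have hnn : ∀ j : ℕ, 0 ≤ f (2 * j) := by
    intro j
    rw [heven j, pow_mul]
    have h0 : (0:ℝ) ≤ (t ^ 2) ^ j := pow_nonneg (sq_nonneg t) j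
    positivity
  rw [← hts, ENNReal.ofReal_tsum_of_nonneg hnn hse]
  exact tsum_congr fun j => by rw [heven j]

lemma gamma_dup (j : ℕ) : Real.Gamma ((j : ℝ) + 1/2) * (j.factorial : ℝ)
    = Real.sqrt π * (((2 * j).factorial : ℝ)) / 4 ^ j := by
  have h := Real.Gamma_mul_Gamma_add_half ((j : ℝ) + 1/2)
  rw [show (j : ℝ) + 1/2 + 1/2 = (j : ℝ) + 1 by ring, Real.Gamma_nat_eq_factorial j,
    show 2 * ((j : ℝ) + 1/2) = ((2 * j : ℕ) : ℝ) + 1 by push_cast; ring,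
    Real.Gamma_nat_eq_factorial (2 * j)] at h
  rw [show (1:ℝ) - (((2 * j : ℕ) : ℝ) + 1) = -((2 * j : ℕ) : ℝ) by push_cast; ring,
    Real.rpow_neg (by norm_num : (0:ℝ) ≤ 2), Real.rpow_natCast, pow_mul] at h
  rw [h]
  norm_num
  ring

lemma Gamma_half_add (j : ℕ) : Real.Gamma ((1:ℝ)/2 + (j:ℝ))
    = Real.sqrt π * (((2 * j).factorial : ℝ)) / (4 ^ j * (j.factorial : ℝ)) := by
  have hdup := gamma_dup j
  have hfac : ((j.factorial : ℝ)) ≠ 0 := Nat.cast_ne_zero.2 j.factorial_ne_zero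
  have h4 : ((4:ℝ) ^ j) ≠ 0 := by positivity
  rw [show (1:ℝ)/2 + (j:ℝ) = (j:ℝ) + 1/2 by ring]
  field_simp at hdup ⊢
  linear_combination hdup

lemma base_term (m y : ℝ) (hy : 0 < y) (j : ℕ) :
    1 / (2 * Real.sqrt y) * ((Real.sqrt (2 * π))⁻¹ * Real.exp (-(y + m^2)/2)
        * (2 * (m * Real.sqrt y) ^ (2 * j) / ((2 * j).factorial : ℝ)))
      = poissonWeight j (m ^ 2) * ((1/2 : ℝ) ^ ((1:ℝ)/2 + (j:ℝ)) / Gamma ((1:ℝ)/2 + (j:ℝ))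
          * y ^ ((1:ℝ)/2 + (j:ℝ) - 1) * Real.exp (-(1/2 * y))) := by
  have hsy : 0 < Real.sqrt y := Real.sqrt_pos.2 hy
  have hsq : Real.sqrt y ^ 2 = y := Real.sq_sqrt hy.le
  have e1 : (m * Real.sqrt y) ^ (2 * j) = (m ^ 2) ^ j * y ^ j := by
    rw [mul_pow, pow_mul, pow_mul, hsq]
  have e2 : y ^ ((1:ℝ)/2 + (j:ℝ) - 1) = y ^ j / Real.sqrt y := by
    rw [show (1:ℝ)/2 + (j:ℝ) - 1 = (j:ℝ) + (-(1/2)) by ring, Real.rpow_add hy,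
      Real.rpow_natCast, Real.rpow_neg hy.le, ← Real.sqrt_eq_rpow, div_eq_mul_inv]
  have e3 : (1/2:ℝ) ^ ((1:ℝ)/2 + (j:ℝ)) = (Real.sqrt 2)⁻¹ * (1/2:ℝ) ^ j := by
    rw [Real.rpow_add (by norm_num : (0:ℝ) < 1/2), Real.rpow_natCast]
    congr 1
    rw [← Real.sqrt_eq_rpow, one_div, Real.sqrt_inv]
  have e4 : Real.exp (-(y + m^2)/2) = Real.exp (-(1/2 * y)) * Real.exp (-m^2/2) := by
    rw [← Real.exp_add]; ring_nf
  have e5 : Real.sqrt (2*π) = Real.sqrt 2 * Real.sqrt π := Real.sqrt_mul (by norm_num) π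
  have hs2 : 0 < Real.sqrt 2 := Real.sqrt_pos.2 (by norm_num)
  have hspi : 0 < Real.sqrt π := Real.sqrt_pos.2 Real.pi_pos
  have hfacj : (0:ℝ) < (j.factorial : ℝ) := by exact_mod_cast j.factorial_pos
  have hfac2j : (0:ℝ) < ((2*j).factorial : ℝ) := by exact_mod_cast (2*j).factorial_pos
  rw [e1, e2, e3, e4, e5, Gamma_half_add j,
    show ((4:ℝ) ^ j) = 2 ^ (2 * j) by rw [pow_mul]; norm_num]
  unfold poissonWeight
  field_simp
  ring_nf
  rw [mul_assoc, ← mul_pow]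
  norm_num

lemma gaussianPDFReal_one (m x : ℝ) :
    gaussianPDFReal m 1 x = (Real.sqrt (2*π))⁻¹ * Real.exp (-(x - m)^2/2) := by
  simp [gaussianPDFReal]

lemma pdf_sum (m y : ℝ) (hy : 0 < y) :
    gaussianPDFReal m 1 (Real.sqrt y) + gaussianPDFReal m 1 (-Real.sqrt y)
      = (Real.sqrt (2*π))⁻¹ * Real.exp (-(y + m^2)/2)
        * (Real.exp (m * Real.sqrt y) + Real.exp (-(m * Real.sqrt y))) := by
  set s := Real.sqrt y with hs
  have hsq : s ^ 2 = y := Real.sq_sqrt hy.le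
  rw [gaussianPDFReal_one, gaussianPDFReal_one]
  have h1 : -(s - m)^2/2 = -(y + m^2)/2 + m * Real.sqrt y := by
    have e : (s - m)^2 = y - 2*(m*s) + m^2 := by rw [← hsq]; ring
    rw [e]; ring
  have h2 : -(-s - m)^2/2 = -(y + m^2)/2 + -(m * s) := by
    have e : (-s - m)^2 = y + 2*(m*s) + m^2 := by rw [← hsq]; ring
    rw [e]; ring
  rw [h1, h2, Real.exp_add, Real.exp_add]
  ring

lemma gauss_sq (m : ℝ) :
    (gaussianReal m 1).map (fun x : ℝ => x ^ 2) = volume.withDensity (ncPdf 1 (m ^ 2)) := by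
  rw [gaussianReal_of_var_ne_zero m one_ne_zero,
    map_sq_withDensity (measurable_gaussianPDF m 1)]
  congr 1
  funext y
  by_cases hy : y ∈ Ioi (0:ℝ)
  · rw [indicator_of_mem hy]
    have hy' : (0:ℝ) < y := hy
    have hsy : 0 < Real.sqrt y := Real.sqrt_pos.2 hy'
    have hB : (0:ℝ) ≤ (Real.sqrt (2*π))⁻¹ * Real.exp (-(y + m^2)/2) := by positivity
    calc ENNReal.ofReal (1 / (2 * Real.sqrt y)) *
          (gaussianPDF m 1 (Real.sqrt y) + gaussianPDF m 1 (-Real.sqrt y))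
        = ENNReal.ofReal (1 / (2 * Real.sqrt y)) *
            (ENNReal.ofReal ((Real.sqrt (2*π))⁻¹ * Real.exp (-(y + m^2)/2)) *
             ENNReal.ofReal (Real.exp (m * Real.sqrt y) + Real.exp (-(m * Real.sqrt y)))) := by
          rw [gaussianPDF, gaussianPDF,
            ← ENNReal.ofReal_add (gaussianPDFReal_nonneg m 1 _) (gaussianPDFReal_nonneg m 1 _),
            pdf_sum m y hy', ENNReal.ofReal_mul hB]
      _ = ∑' j : ℕ, ENNReal.ofReal (1 / (2 * Real.sqrt y)) *
            (ENNReal.ofReal ((Real.sqrt (2*π))⁻¹ * Real.exp (-(y + m^2)/2)) *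
             ENNReal.ofReal (2 * (m * Real.sqrt y) ^ (2 * j) / ((2 * j).factorial : ℝ))) := by
          rw [cosh_tsum (m * Real.sqrt y), ← ENNReal.tsum_mul_left, ← ENNReal.tsum_mul_left]
      _ = ncPdf 1 (m ^ 2) y := by
          rw [ncPdf]
          refine tsum_congr fun j => ?_
          have hterm : (0:ℝ) ≤ 2 * (m * Real.sqrt y) ^ (2 * j) / ((2 * j).factorial : ℝ) := by
            rw [pow_mul]
            have h0 : (0:ℝ) ≤ ((m * Real.sqrt y) ^ 2) ^ j := pow_nonneg (sq_nonneg _) j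
            positivity
          rw [← ENNReal.ofReal_mul hB, ← ENNReal.ofReal_mul (by positivity),
            base_term m y hy' j,
            ENNReal.ofReal_mul (poissonWeight_nonneg (sq_nonneg m))]
          congr 1
          rw [gammaPDF_of_nonneg hy'.le]
          norm_num
  · rw [indicator_of_notMem hy, ncPdf_one_of_nonpos (le_of_not_gt hy)]

lemma key : ∀ (n : ℕ) (m : Fin (n + 1) → ℝ),
    Measure.map (fun x : Fin (n + 1) → ℝ => ∑ i, (x i) ^ 2)
        (Measure.pi fun i => gaussianReal (m i) 1)
      = volume.withDensity (ncPdf (n + 1) (∑ i, (m i) ^ 2)) := by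
  intro n
  induction n with
  | zero =>
    intro m
    have hpi : (Measure.pi fun i : Fin 1 => gaussianReal (m i) 1)
        = Measure.pi fun _ : Fin 1 => gaussianReal (m 0) 1 := by
      congr 1
      funext i
      rw [Subsingleton.elim i 0]
    have hfun : (fun x : Fin 1 → ℝ => ∑ i, (x i) ^ 2)
        = (fun t : ℝ => t ^ 2) ∘ (MeasurableEquiv.funUnique (Fin 1) ℝ) := by
      funext x
      simp [Fin.sum_univ_one]
    rw [hpi, hfun, ← Measure.map_map (by fun_prop) (MeasurableEquiv.measurable _)]
    erw [(measurePreserving_funUnique (gaussianReal (m 0) 1) (Fin 1)).map_eq]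
    rw [gauss_sq (m 0), Fin.sum_univ_one]
  | succ n ih =>
    intro m
    have hmp := measurePreserving_piFinSuccAbove (fun i : Fin (n + 2) => gaussianReal (m i) 1) 0
    set e := MeasurableEquiv.piFinSuccAbove (fun _ : Fin (n + 2) => ℝ) 0 with he
    have hsumm : Measurable (fun x : Fin (n + 2) → ℝ => ∑ i, (x i) ^ 2) := by fun_prop
    have htail : (fun j : Fin (n + 1) => gaussianReal (m ((0 : Fin (n + 2)).succAbove j)) 1)
        = fun j => gaussianReal (m j.succ) 1 := by
      funext j
      rw [Fin.succAbove_zero]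
    have hcomp : (fun x : Fin (n + 2) → ℝ => ∑ i, (x i) ^ 2) ∘ e.symm
        = (fun p : ℝ × ℝ => p.1 + p.2) ∘
            (Prod.map (fun t : ℝ => t ^ 2) (fun y : Fin (n + 1) → ℝ => ∑ j, (y j) ^ 2)) := by
      funext p
      simp only [Function.comp_apply, MeasurableEquiv.piFinSuccAbove_symm_apply, Prod.map]
      have h0 : (e.symm p : Fin (n + 2) → ℝ)
          = Fin.insertNth (α := fun _ : Fin (n + 2) => ℝ) 0 p.1 p.2 := rfl
      rw [Fin.sum_univ_succ, h0]
      have h1 : (Fin.insertNth (α := fun _ : Fin (n + 2) => ℝ) 0 p.1 p.2) 0 = p.1 := by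
        simp
      have h2 : ∀ j : Fin (n + 1),
          (Fin.insertNth (α := fun _ : Fin (n + 2) => ℝ) 0 p.1 p.2) j.succ = p.2 j := by
        intro j
        have hj : (j.succ : Fin (n + 2)) = (0 : Fin (n + 2)).succAbove j := by
          rw [Fin.succAbove_zero]
        rw [hj]
        simp
      rw [h1]
      congr 1
      all_goals exact Finset.sum_congr rfl fun j _ => by rw [h2 j]
    calc Measure.map (fun x : Fin (n + 2) → ℝ => ∑ i, (x i) ^ 2)
          (Measure.pi fun i => gaussianReal (m i) 1)
        = Measure.map (fun x : Fin (n + 2) → ℝ => ∑ i, (x i) ^ 2)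
            (Measure.map e.symm ((gaussianReal (m 0) 1).prod
              (Measure.pi fun j => gaussianReal (m ((0 : Fin (n + 2)).succAbove j)) 1))) := by
          rw [(hmp.symm e).map_eq]
      _ = Measure.map ((fun x : Fin (n + 2) → ℝ => ∑ i, (x i) ^ 2) ∘ e.symm)
            ((gaussianReal (m 0) 1).prod (Measure.pi fun j => gaussianReal (m j.succ) 1)) := by
          rw [htail, Measure.map_map hsumm (MeasurableEquiv.measurable _)]
      _ = Measure.map (fun p : ℝ × ℝ => p.1 + p.2)
            (((gaussianReal (m 0) 1).map (fun t : ℝ => t ^ 2)).prod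
              ((Measure.pi fun j => gaussianReal (m j.succ) 1).map
                (fun y : Fin (n + 1) → ℝ => ∑ j, (y j) ^ 2))) := by
          rw [hcomp, ← Measure.map_map measurable_add (by fun_prop),
            Measure.map_prod_map _ _ (by fun_prop) (by fun_prop)]
      _ = volume.withDensity (ncPdf (n + 2) (∑ i, (m i) ^ 2)) := by
          rw [gauss_sq (m 0), ih (fun j => m j.succ)]
          have hconv := ncPdf_conv (d := 1) (e := n + 1) (k := m 0 ^ 2)
            (l := ∑ j : Fin (n + 1), m j.succ ^ 2) (le_refl 1) (Nat.le_add_left 1 n)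
            (sq_nonneg (m 0)) (Finset.sum_nonneg fun j _ => sq_nonneg (m j.succ))
          rw [Measure.conv] at hconv
          rw [hconv, show 1 + (n + 1) = n + 2 from by omega]
          conv_rhs => rw [Fin.sum_univ_succ]

end NCChi

end NCChiHelpers

/-- For `X ~ N(μ, I_d)`, the squared norm `‖X‖²` follows the noncentral chi-square
distribution with `d` degrees of freedom and noncentrality `λ = ‖μ‖²`, realized as a
Poisson(λ/2) mixture of Gamma((d+2j)/2, 1/2) distributions. -/
theorem gaussian_sq_norm_noncentral_chiSq (d : ℕ) (hd : 1 ≤ d)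
    (μ : EuclideanSpace ℝ (Fin d)) :
    Measure.map (fun x : Fin d → ℝ => ∑ i, (x i) ^ 2)
      (Measure.pi fun i => gaussianReal (μ i) 1) =
    Measure.sum (fun j : ℕ =>
      ENNReal.ofReal (poissonWeight j (‖μ‖ ^ 2)) •
        gammaMeasure ((d : ℝ) / 2 + j) (1 / 2)) := by
  obtain ⟨n, rfl⟩ : ∃ n, d = n + 1 := ⟨d - 1, (Nat.succ_pred_eq_of_pos hd).symm⟩
  have hnorm : ‖μ‖ ^ 2 = ∑ i, (μ i) ^ 2 := by
    rw [EuclideanSpace.norm_eq, Real.sq_sqrt (Finset.sum_nonneg fun i _ => sq_nonneg _)]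
    exact Finset.sum_congr rfl fun i _ => by rw [Real.norm_eq_abs, sq_abs]
  rw [NCChi.ncChiSq_eq, hnorm]
  exact NCChi.key n (fun i => μ i)
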